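/- If φ is a Schwartz function on ℝ^d and v, q : ℝ^d → ℝ are L-periodic with ⟨v²⟩, ⟨q²⟩ < ∞, then ⟨|v·(φ∗q) − φ∗(vq)|⟩ ≤ 2 (∫_{ℝ^d} |φ(y)| dy) ⟨v²⟩^{1/2} ⟨q²⟩^{1/2}, where ⟨f⟩ = L^{−d}∫_{[0,L]^d} f dx. -/

import Mathlib

open MeasureTheory Real Filter
open scoped InnerProductSpace

noncomputable section

abbrev Ed (d : ℕ) := EuclideanSpace ℝ (Fin d)

def box (d : ℕ) (L : ℝ) : Set (Ed d) := {x | ∀ i, x i ∈ Set.Icc (0:ℝ) L}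

def cellAvg (d : ℕ) (L : ℝ) (f : Ed d → ℝ) : ℝ := (L ^ d)⁻¹ * ∫ x in box d L, f x

def IsPer {α : Type*} (d : ℕ) (L : ℝ) (f : Ed d → α) : Prop :=
  ∀ (x : Ed d) (i : Fin d), f (x + L • EuclideanSpace.single i 1) = f x

def conv (d : ℕ) (g f : Ed d → ℝ) (x : Ed d) : ℝ := ∫ y, g y * f (x - y)

def convC (d : ℕ) (g f : Ed d → ℂ) (x : Ed d) : ℂ := ∫ y, g y * f (x - y)

def FT (d : ℕ) (f : Ed d → ℂ) (ξ : Ed d) : ℂ :=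
  (((2 * π) ^ (-(d:ℝ)/2) : ℝ) : ℂ) * ∫ x, f x * Complex.exp (-(Complex.I) * Complex.ofReal ⟪x, ξ⟫_ℝ)

def FTr (d : ℕ) (f : Ed d → ℝ) (ξ : Ed d) : ℂ := FT d (fun x => (f x : ℂ)) ξ

def FTinv (d : ℕ) (f : Ed d → ℂ) (x : Ed d) : ℂ :=
  (((2 * π) ^ (-(d:ℝ)/2) : ℝ) : ℂ) * ∫ ξ, f ξ * Complex.exp (Complex.I * Complex.ofReal ⟪ξ, x⟫_ℝ)

def mvec (d : ℕ) (L : ℝ) (k : Fin d → ℤ) : Ed d := WithLp.toLp 2 (fun i => (2 * π / L) * (k i : ℝ))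

def fc (d : ℕ) (L : ℝ) (f : Ed d → ℂ) (k : Fin d → ℤ) : ℂ :=
  (((L ^ d)⁻¹ : ℝ) : ℂ) * ∫ x in box d L, f x * Complex.exp (-(Complex.I) * Complex.ofReal ((2 * π / L) * ∑ i, (k i : ℝ) * x i))

def fcR (d : ℕ) (L : ℝ) (f : Ed d → ℝ) (k : Fin d → ℤ) : ℂ := fc d L (fun x => (f x : ℂ)) k

def lap {F : Type*} [NormedAddCommGroup F] [NormedSpace ℝ F] (d : ℕ) (f : Ed d → F) (x : Ed d) : F :=
  ∑ i, iteratedDeriv 2 (fun t : ℝ => f (x + t • EuclideanSpace.single i 1)) 0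

open Set Submodule
open scoped Pointwise ENNReal

variable {d : ℕ} {L : ℝ}

def bas (d : ℕ) (L : ℝ) (hL : 0 < L) : Module.Basis (Fin d) ℝ (Ed d) :=
  Module.Basis.unitsSMul (EuclideanSpace.basisFun (Fin d) ℝ).toBasis (fun _ => Units.mk0 L hL.ne')
lemma bas_apply (hL : 0 < L) (i : Fin d) :
    bas d L hL i = L • EuclideanSpace.single i 1 := by
  simp [bas, Module.Basis.unitsSMul_apply, Units.smul_def, OrthonormalBasis.coe_toBasis,
    EuclideanSpace.basisFun_apply]

/-- the lattice -/
def lat (d : ℕ) (L : ℝ) (hL : 0 < L) : AddSubgroup (Ed d) :=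
  (Submodule.span ℤ (Set.range ⇑(bas d L hL))).toAddSubgroup

lemma lat_inv {α : Type*} (hL : 0 < L) {f : Ed d → α} (hf : IsPer d L f)
    (g : lat d L hL) (x : Ed d) : f ((g : Ed d) + x) = f x := by
  set H : AddSubgroup (Ed d) :=
    { carrier := {v | ∀ x, f (x + v) = f x}
      zero_mem' := by simp
      add_mem' := by
        intro u v hu hv x
        rw [← add_assoc, hv, hu]
      neg_mem' := by
        intro v hv x
        have := hv (x + -v)
        simpa using this.symm } with hH
  have hle : ∀ z ∈ lat d L hL, z ∈ H := by
    intro z hz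
    refine Submodule.span_induction ?_ ?_ ?_ ?_ hz
    · rintro _ ⟨i, rfl⟩
      rw [bas_apply hL]
      exact fun x => hf x i
    · exact H.zero_mem
    · exact fun u v _ _ hu hv => H.add_mem hu hv
    · exact fun n v _ hv => AddSubgroup.zsmul_mem H hv n
  rw [add_comm]
  exact hle g g.2 x

instance (hL : 0 < L) : Countable (lat d L hL) :=
  (inferInstance : Countable (Submodule.span ℤ (Set.range ⇑(bas d L hL))))

lemma lat_isFD (hL : 0 < L) :
    IsAddFundamentalDomain (lat d L hL) (ZSpan.fundamentalDomain (bas d L hL)) volume :=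
  ZSpan.isAddFundamentalDomain' (bas d L hL) volume

lemma hyperplane_null (i : Fin d) (c : ℝ) : volume {x : Ed d | x i = c} = 0 := by
  have h := EuclideanSpace.volume_preserving_symm_measurableEquiv_toLp (Fin d)
  have hm : MeasurableSet {f : Fin d → ℝ | f i = c} :=
    measurableSet_eq_fun (measurable_pi_apply i) measurable_const
  have := h.measure_preimage hm.nullMeasurableSet
  have he : (MeasurableEquiv.toLp 2 (Fin d → ℝ)).symm ⁻¹' {f : Fin d → ℝ | f i = c}
      = {x : Ed d | x i = c} := rfl
  rw [he] at this
  rw [this]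
  exact MeasureTheory.Measure.pi_hyperplane (fun _ => (volume : Measure ℝ)) i c

lemma bas_repr (hL : 0 < L) (x : Ed d) (i : Fin d) :
    (bas d L hL).repr x i = L⁻¹ * x i := by
  simp [bas, Module.Basis.repr_unitsSMul, OrthonormalBasis.coe_toBasis_repr_apply,
    EuclideanSpace.basisFun_repr, Units.smul_def]

lemma fund_eq (hL : 0 < L) :
    ZSpan.fundamentalDomain (bas d L hL) = {x : Ed d | ∀ i, x i ∈ Set.Ico (0:ℝ) L} := by
  ext x
  simp only [ZSpan.mem_fundamentalDomain, Set.mem_Ico, Set.mem_setOf_eq, bas_repr hL]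
  refine forall_congr' fun i => ?_
  rw [inv_mul_eq_div]
  constructor
  · rintro ⟨h1, h2⟩
    refine ⟨?_, (div_lt_one hL).mp h2⟩
    have := (le_div_iff₀ hL).mp h1
    linarith
  · rintro ⟨h1, h2⟩
    exact ⟨div_nonneg h1 hL.le, (div_lt_one hL).mpr h2⟩

lemma box_ae_eq (hL : 0 < L) :
    (box d L : Set (Ed d)) =ᵐ[volume] ZSpan.fundamentalDomain (bas d L hL) := by
  rw [fund_eq hL, Filter.eventuallyEq_set]
  have hnull : volume (⋃ i : Fin d, {x : Ed d | x i = L}) = 0 :=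
    measure_iUnion_null fun i => hyperplane_null i L
  filter_upwards [measure_eq_zero_iff_ae_notMem.mp hnull] with x hx
  simp only [Set.mem_iUnion, Set.mem_setOf_eq, not_exists] at hx
  simp only [box, Set.mem_setOf_eq, Set.mem_Icc, Set.mem_Ico]
  exact forall_congr' fun i => by
    constructor
    · rintro ⟨h1, h2⟩; exact ⟨h1, lt_of_le_of_ne h2 (hx i)⟩
    · rintro ⟨h1, h2⟩; exact ⟨h1, h2.le⟩

/-- Key lemma: translation invariance of the cell integral of a periodic function. -/
lemma shiftInv (hL : 0 < L) (f : Ed d → ℝ≥0∞) (hper : IsPer d L f) (y : Ed d) :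
    ∫⁻ x in box d L, f (x - y) = ∫⁻ x in box d L, f x := by
  have hres : (volume : Measure (Ed d)).restrict (box d L)
      = volume.restrict (ZSpan.fundamentalDomain (bas d L hL)) :=
    Measure.restrict_congr_set (box_ae_eq hL)
  rw [hres]
  have hmp : MeasurePreserving (fun x : Ed d => x - y) volume volume :=
    measurePreserving_sub_right volume y
  have hemb : MeasurableEmbedding (fun x : Ed d => x - y) :=
    (MeasurableEquiv.subRight y).measurableEmbedding
  have himg : (fun x : Ed d => x - y) '' (ZSpan.fundamentalDomain (bas d L hL))
      = (-y) +ᵥ (ZSpan.fundamentalDomain (bas d L hL)) := by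
    ext u
    simp only [Set.mem_image, Set.mem_vadd_set]
    constructor
    · rintro ⟨b, hb, rfl⟩; exact ⟨b, hb, by simp [vadd_eq_add]; abel⟩
    · rintro ⟨b, hb, rfl⟩; exact ⟨b, hb, by simp [vadd_eq_add]; abel⟩
  calc ∫⁻ x in ZSpan.fundamentalDomain (bas d L hL), f (x - y)
      = ∫⁻ u in (-y) +ᵥ ZSpan.fundamentalDomain (bas d L hL), f u := by
        rw [← himg]; exact hmp.setLIntegral_comp_emb hemb f _
    _ = ∫⁻ x in ZSpan.fundamentalDomain (bas d L hL), f x := by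
        exact ((lat_isFD hL).vadd_of_comm (-y)).setLIntegral_eq (lat_isFD hL) f
          (fun g x => lat_inv hL hper g x)

lemma aemeas_global (hL : 0 < L) {g : Ed d → ℝ}
    (hg : AEMeasurable g (volume.restrict (box d L))) (hper : IsPer d L g) :
    AEMeasurable g volume := by
  set D := ZSpan.fundamentalDomain (bas d L hL) with hD
  have hsub : D ⊆ box d L := by
    rw [hD, fund_eq hL]
    intro x hx i
    exact ⟨(hx i).1, (hx i).2.le⟩
  have hloc : AEMeasurable g (volume.restrict D) :=
    hg.mono_measure (Measure.restrict_mono hsub le_rfl)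
  have hpiece : ∀ γ : lat d L hL, AEMeasurable g (volume.restrict ((γ : Ed d) +ᵥ D)) := by
    intro γ
    have hmp : MeasurePreserving (fun x : Ed d => x - (γ : Ed d))
        (volume.restrict ((γ : Ed d) +ᵥ D)) (volume.restrict D) := by
      have h1 : MeasurePreserving (fun x : Ed d => x - (γ : Ed d)) volume volume :=
        measurePreserving_sub_right volume _
      have h2 : (fun x : Ed d => x - (γ : Ed d)) ⁻¹' D = (γ : Ed d) +ᵥ D := by
        ext u
        simp only [Set.mem_preimage, Set.mem_vadd_set]
        constructor
        · intro h; exact ⟨u - γ, h, by simp [vadd_eq_add]⟩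
        · rintro ⟨b, hb, rfl⟩; simpa [vadd_eq_add] using hb
      have := h1.restrict_preimage_emb (MeasurableEquiv.subRight (γ : Ed d)).measurableEmbedding D
      rwa [h2] at this
    have hcomp : AEMeasurable (fun x => g (x - (γ : Ed d)))
        (volume.restrict ((γ : Ed d) +ᵥ D)) :=
      hloc.comp_quasiMeasurePreserving hmp.quasiMeasurePreserving
    have : (fun x => g (x - (γ : Ed d))) = g := by
      funext x
      have := lat_inv hL hper γ (x - γ)
      simpa [vadd_eq_add, add_sub_cancel] using this.symm
    rwa [this] at hcomp
  have hU : AEMeasurable g (volume.restrict (⋃ γ : lat d L hL, (γ : Ed d) +ᵥ D)) :=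
    aemeasurable_iUnion_iff.mpr hpiece
  rwa [Measure.restrict_eq_self_of_ae_mem ?_] at hU
  filter_upwards [(lat_isFD hL).ae_covers] with x hx
  obtain ⟨γ, hγ⟩ := hx
  refine Set.mem_iUnion.mpr ⟨-γ, ⟨γ +ᵥ x, hγ, ?_⟩⟩
  rw [show (γ +ᵥ x : Ed d) = (γ : Ed d) + x from rfl]
  show ((-γ : lat d L hL) : Ed d) +ᵥ ((γ : Ed d) + x) = x
  rw [vadd_eq_add, AddSubgroup.coe_neg]
  abel

lemma cs_box {α : Type*} [MeasurableSpace α] {μ : Measure α} {a b : α → ℝ≥0∞}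
    (ha : AEMeasurable a μ) (hb : AEMeasurable b μ) :
    ∫⁻ x, a x * b x ∂μ ≤
      (∫⁻ x, a x ^ (2:ℝ) ∂μ) ^ (1/2:ℝ) * (∫⁻ x, b x ^ (2:ℝ) ∂μ) ^ (1/2:ℝ) := by
  have hpq : Real.HolderConjugate 2 2 := Real.HolderConjugate.two_two
  simpa using ENNReal.lintegral_mul_le_Lp_mul_Lq μ hpq ha hb

/-- Lemma 2, case s = 0: commutator estimate with constant 2 for $L^2$ periodic
functions $v$ and $q$. -/
theorem stmt1 (d : ℕ) (L : ℝ) (hL : 0 < L) (φ : SchwartzMap (Ed d) ℝ)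
    (v q : Ed d → ℝ) (hvper : IsPer d L v) (hqper : IsPer d L q)
    (hv2 : IntegrableOn (fun x => (v x) ^ 2) (box d L))
    (hq2 : IntegrableOn (fun x => (q x) ^ 2) (box d L)) :
    cellAvg d L (fun x => |v x * conv d (⇑φ) q x - conv d (⇑φ) (fun y => v y * q y) x|)
      ≤ 2 * (∫ y, |φ y|) *
          Real.sqrt (cellAvg d L (fun x => (v x) ^ 2)) *
          Real.sqrt (cellAvg d L (fun x => (q x) ^ 2)) := by
  classical
  set B := box d L with hB
  set F : Ed d → ℝ := fun x => v x * conv d (⇑φ) q x - conv d (⇑φ) (fun y => v y * q y) x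
    with hF
  -- basic positivity facts
  have hφa : Integrable (fun y => |φ y|) := (φ.integrable).abs
  set A : ℝ := ∫ y, |φ y| with hA
  have hA0 : 0 ≤ A := integral_nonneg fun y => abs_nonneg _
  set Iv : ℝ := ∫ x in B, v x ^ 2 with hIv
  set Iq : ℝ := ∫ x in B, q x ^ 2 with hIq
  have hIv0 : 0 ≤ Iv := integral_nonneg fun x => sq_nonneg _
  have hIq0 : 0 ≤ Iq := integral_nonneg fun x => sq_nonneg _
  have hc0 : (0:ℝ) ≤ (L ^ d)⁻¹ := by positivity
  have hrhs :
      2 * A * Real.sqrt (cellAvg d L (fun x => (v x) ^ 2)) *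
          Real.sqrt (cellAvg d L (fun x => (q x) ^ 2))
        = (L ^ d)⁻¹ * (2 * A * Real.sqrt Iv * Real.sqrt Iq) := by
    have h1 : cellAvg d L (fun x => (v x) ^ 2) = (L ^ d)⁻¹ * Iv := rfl
    have h2 : cellAvg d L (fun x => (q x) ^ 2) = (L ^ d)⁻¹ * Iq := rfl
    rw [h1, h2, Real.sqrt_mul hc0, Real.sqrt_mul hc0]
    have h3 : Real.sqrt ((L ^ d)⁻¹) * Real.sqrt ((L ^ d)⁻¹) = (L ^ d)⁻¹ :=
      Real.mul_self_sqrt hc0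
    nlinarith [Real.sqrt_nonneg Iv, Real.sqrt_nonneg Iq, Real.sqrt_nonneg ((L^d)⁻¹),
      mul_nonneg (mul_nonneg hA0 (Real.sqrt_nonneg Iv)) (Real.sqrt_nonneg Iq)]
  by_cases hFint : IntegrableOn (fun x => |F x|) B
  swap
  · have hz : ∫ x in box d L,
        |v x * conv d (⇑φ) q x - conv d (⇑φ) (fun y => v y * q y) x| = 0 :=
      integral_undef (by simpa [hF, IntegrableOn] using hFint)
    unfold cellAvg
    rw [hz, mul_zero]
    have h4 : 0 ≤ (2:ℝ) * A := by linarith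
    exact mul_nonneg (mul_nonneg h4 (Real.sqrt_nonneg _)) (Real.sqrt_nonneg _)
  -- measurability
  have hvm : AEMeasurable (fun x => |v x|) (volume.restrict B) := by
    have h0 := hv2.aestronglyMeasurable.aemeasurable
    have h1 : AEMeasurable (fun x => Real.sqrt (v x ^ 2)) (volume.restrict B) :=
      Real.continuous_sqrt.measurable.comp_aemeasurable h0
    simpa [Real.sqrt_sq_eq_abs] using h1
  have hqm : AEMeasurable (fun x => |q x|) (volume.restrict B) := by
    have h0 := hq2.aestronglyMeasurable.aemeasurable
    have h1 : AEMeasurable (fun x => Real.sqrt (q x ^ 2)) (volume.restrict B) :=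
      Real.continuous_sqrt.measurable.comp_aemeasurable h0
    simpa [Real.sqrt_sq_eq_abs] using h1
  have hvG : AEMeasurable (fun x => |v x|) (volume : Measure (Ed d)) :=
    aemeas_global hL hvm (fun x i => by simp [hvper x i])
  have hqG : AEMeasurable (fun x => |q x|) (volume : Measure (Ed d)) :=
    aemeas_global hL hqm (fun x i => by simp [hqper x i])
  -- ennreal versions
  set ev : Ed d → ℝ≥0∞ := fun u => (‖v u‖₊ : ℝ≥0∞) with hev
  set eq' : Ed d → ℝ≥0∞ := fun u => (‖q u‖₊ : ℝ≥0∞) with heq'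
  set eφ : Ed d → ℝ≥0∞ := fun y => (‖φ y‖₊ : ℝ≥0∞) with heφ
  have hev_eq : ev = fun u => ENNReal.ofReal |v u| := by
    funext u; exact Real.enorm_eq_ofReal_abs _
  have heq_eq : eq' = fun u => ENNReal.ofReal |q u| := by
    funext u; exact Real.enorm_eq_ofReal_abs _
  have hevm : AEMeasurable ev (volume.restrict B) := by
    rw [hev_eq]; exact ENNReal.measurable_ofReal.comp_aemeasurable hvm
  have heqm : AEMeasurable eq' (volume.restrict B) := by
    rw [heq_eq]; exact ENNReal.measurable_ofReal.comp_aemeasurable hqm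
  have hevG : AEMeasurable ev (volume : Measure (Ed d)) := by
    rw [hev_eq]; exact ENNReal.measurable_ofReal.comp_aemeasurable hvG
  have heqG : AEMeasurable eq' (volume : Measure (Ed d)) := by
    rw [heq_eq]; exact ENNReal.measurable_ofReal.comp_aemeasurable hqG
  have heφm : Measurable eφ := φ.continuous.measurable.enorm
  -- periodicity of ennreal versions
  have hevper : IsPer d L ev := fun x i => by simp [hev, hvper x i]
  have heqper : IsPer d L eq' := fun x i => by simp [heq', hqper x i]
  -- Step 1: pointwise bound
  have key1 : ∀ x : Ed d, (‖F x‖₊ : ℝ≥0∞)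
      ≤ ∫⁻ y, eφ y * ((ev x + ev (x - y)) * eq' (x - y)) := by
    intro x
    have h1 : (‖conv d (⇑φ) q x‖₊ : ℝ≥0∞) ≤ ∫⁻ y, eφ y * eq' (x - y) := by
      refine le_trans (enorm_integral_le_lintegral_enorm _) (lintegral_mono fun y => ?_)
      simp [heφ, heq', nnnorm_mul, ENNReal.coe_mul, enorm_eq_nnnorm]
    have h2 : (‖conv d (⇑φ) (fun u => v u * q u) x‖₊ : ℝ≥0∞)
        ≤ ∫⁻ y, eφ y * (ev (x - y) * eq' (x - y)) := by
      refine le_trans (enorm_integral_le_lintegral_enorm _) (lintegral_mono fun y => ?_)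
      simp [heφ, hev, heq', nnnorm_mul, ENNReal.coe_mul, mul_assoc, enorm_eq_nnnorm]
    calc (‖F x‖₊ : ℝ≥0∞)
        ≤ (‖v x * conv d (⇑φ) q x‖₊ : ℝ≥0∞)
            + (‖conv d (⇑φ) (fun u => v u * q u) x‖₊ : ℝ≥0∞) := by
          rw [hF]
          exact_mod_cast nnnorm_sub_le _ _
      _ = ev x * (‖conv d (⇑φ) q x‖₊ : ℝ≥0∞)
            + (‖conv d (⇑φ) (fun u => v u * q u) x‖₊ : ℝ≥0∞) := by
          rw [nnnorm_mul]; push_cast; rfl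
      _ ≤ ev x * (∫⁻ y, eφ y * eq' (x - y))
            + ∫⁻ y, eφ y * (ev (x - y) * eq' (x - y)) := by
          exact add_le_add (mul_le_mul_right h1 _) h2
      _ = (∫⁻ y, ev x * (eφ y * eq' (x - y)))
            + ∫⁻ y, eφ y * (ev (x - y) * eq' (x - y)) := by
          rw [lintegral_const_mul' _ _ ENNReal.coe_ne_top]
      _ ≤ ∫⁻ y, (ev x * (eφ y * eq' (x - y)) + eφ y * (ev (x - y) * eq' (x - y))) :=
          le_lintegral_add _ _
      _ = ∫⁻ y, eφ y * ((ev x + ev (x - y)) * eq' (x - y)) := by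
          refine lintegral_congr fun y => ?_
          ring
  -- quasi measure preserving maps
  set ρ : Measure (Ed d × Ed d) := (volume.restrict B).prod volume with hρ
  have hacB : (volume.restrict B : Measure (Ed d)) ≪ volume :=
    Measure.absolutelyContinuous_of_le Measure.restrict_le_self
  have hqmp_sub : Measure.QuasiMeasurePreserving (fun p : Ed d × Ed d => p.1 - p.2)
      ρ (volume : Measure (Ed d)) := by
    have h0 := quasiMeasurePreserving_sub_of_right_invariant
      (volume : Measure (Ed d)) (volume : Measure (Ed d))
    exact h0.mono (hacB.prod Measure.AbsolutelyContinuous.rfl) Measure.AbsolutelyContinuous.rfl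
  have hqmp_fst : Measure.QuasiMeasurePreserving (Prod.fst : Ed d × Ed d → Ed d)
      ρ (volume.restrict B) := Measure.quasiMeasurePreserving_fst
  -- Step 2+3 : Tonelli
  have hΦmeas : AEMeasurable
      (fun p : Ed d × Ed d => eφ p.2 * ((ev p.1 + ev (p.1 - p.2)) * eq' (p.1 - p.2))) ρ := by
    refine AEMeasurable.mul (heφm.comp measurable_snd).aemeasurable (AEMeasurable.fun_mul ?_ ?_)
    · exact (hevm.comp_quasiMeasurePreserving hqmp_fst).add
        (hevG.comp_quasiMeasurePreserving hqmp_sub)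
    · exact heqG.comp_quasiMeasurePreserving hqmp_sub
  have hswap : ∫⁻ x in B, ∫⁻ y, eφ y * ((ev x + ev (x - y)) * eq' (x - y))
      = ∫⁻ y, ∫⁻ x in B, eφ y * ((ev x + ev (x - y)) * eq' (x - y)) := by
    exact lintegral_lintegral_swap hΦmeas
  -- Step 4 : inner bound for fixed y
  set Ve : ℝ≥0∞ := ∫⁻ x in B, ev x ^ (2:ℝ) with hVe
  set Qe : ℝ≥0∞ := ∫⁻ x in B, eq' x ^ (2:ℝ) with hQe
  have inner_bound : ∀ y : Ed d,
      (∫⁻ x in B, (ev x + ev (x - y)) * eq' (x - y))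
        ≤ 2 * (Ve ^ (1/2:ℝ) * Qe ^ (1/2:ℝ)) := by
    intro y
    have hqy : AEMeasurable (fun x => eq' (x - y)) (volume.restrict B) := by
      refine heqG.comp_quasiMeasurePreserving ?_
      exact ((measurePreserving_sub_right (volume : Measure (Ed d)) y
        ).quasiMeasurePreserving).mono hacB Measure.AbsolutelyContinuous.rfl
    have hvy : AEMeasurable (fun x => ev (x - y)) (volume.restrict B) := by
      refine hevG.comp_quasiMeasurePreserving ?_
      exact ((measurePreserving_sub_right (volume : Measure (Ed d)) y
        ).quasiMeasurePreserving).mono hacB Measure.AbsolutelyContinuous.rfl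
    have hsplit : (∫⁻ x in B, (ev x + ev (x - y)) * eq' (x - y))
        = (∫⁻ x in B, ev x * eq' (x - y)) + ∫⁻ x in B, ev (x - y) * eq' (x - y) := by
      rw [← lintegral_add_left' (hevm.fun_mul hqy)]
      exact lintegral_congr fun x => by ring
    have hterm1 : (∫⁻ x in B, ev x * eq' (x - y)) ≤ Ve ^ (1/2:ℝ) * Qe ^ (1/2:ℝ) := by
      refine le_trans (cs_box hevm hqy) ?_
      have hshift : (∫⁻ x in B, eq' (x - y) ^ (2:ℝ)) = Qe := by
        rw [hB]
        exact shiftInv hL (fun u => eq' u ^ (2:ℝ)) (fun x i => by simp only [heqper x i]) y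
      rw [hshift]
    have hterm2 : (∫⁻ x in B, ev (x - y) * eq' (x - y)) ≤ Ve ^ (1/2:ℝ) * Qe ^ (1/2:ℝ) := by
      have hshift : (∫⁻ x in B, ev (x - y) * eq' (x - y)) = ∫⁻ x in B, ev x * eq' x := by
        rw [hB]
        exact shiftInv hL (fun u => ev u * eq' u)
          (fun x i => by simp only [hevper x i, heqper x i]) y
      rw [hshift]
      exact cs_box hevm heqm
    calc (∫⁻ x in B, (ev x + ev (x - y)) * eq' (x - y))
        = (∫⁻ x in B, ev x * eq' (x - y)) + ∫⁻ x in B, ev (x - y) * eq' (x - y) := hsplit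
      _ ≤ Ve ^ (1/2:ℝ) * Qe ^ (1/2:ℝ) + Ve ^ (1/2:ℝ) * Qe ^ (1/2:ℝ) := add_le_add hterm1 hterm2
      _ = 2 * (Ve ^ (1/2:ℝ) * Qe ^ (1/2:ℝ)) := (two_mul _).symm
  -- Step 5 : put it together in ℝ≥0∞
  have main_ennreal : (∫⁻ x in B, (‖F x‖₊ : ℝ≥0∞))
      ≤ (∫⁻ y, eφ y) * (2 * (Ve ^ (1/2:ℝ) * Qe ^ (1/2:ℝ))) := by
    calc (∫⁻ x in B, (‖F x‖₊ : ℝ≥0∞))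
        ≤ ∫⁻ x in B, ∫⁻ y, eφ y * ((ev x + ev (x - y)) * eq' (x - y)) :=
          lintegral_mono fun x => key1 x
      _ = ∫⁻ y, ∫⁻ x in B, eφ y * ((ev x + ev (x - y)) * eq' (x - y)) := hswap
      _ = ∫⁻ y, eφ y * ∫⁻ x in B, (ev x + ev (x - y)) * eq' (x - y) := by
          refine lintegral_congr fun y => ?_
          exact lintegral_const_mul' _ _ ENNReal.coe_ne_top
      _ ≤ ∫⁻ y, eφ y * (2 * (Ve ^ (1/2:ℝ) * Qe ^ (1/2:ℝ))) :=
          lintegral_mono fun y => mul_le_mul_right (inner_bound y) _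
      _ = (∫⁻ y, eφ y) * (2 * (Ve ^ (1/2:ℝ) * Qe ^ (1/2:ℝ))) :=
          lintegral_mul_const _ heφm
  -- Step 6 : identify the ennreal integrals with real ones
  have hpow : ∀ (r : ℝ≥0∞), r ^ (2:ℝ) = r ^ (2:ℕ) := by
    intro r
    rw [show ((2:ℝ)) = ((2:ℕ):ℝ) by norm_num, ENNReal.rpow_natCast]
  have hVe_eq : Ve = ENNReal.ofReal Iv := by
    rw [hVe, hIv, ofReal_integral_eq_lintegral_ofReal hv2
      (Filter.Eventually.of_forall fun x => sq_nonneg _)]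
    refine lintegral_congr fun x => ?_
    rw [show ev x = ENNReal.ofReal |v x| from congrFun hev_eq x, hpow,
      ← ENNReal.ofReal_pow (abs_nonneg _), sq_abs]
  have hQe_eq : Qe = ENNReal.ofReal Iq := by
    rw [hQe, hIq, ofReal_integral_eq_lintegral_ofReal hq2
      (Filter.Eventually.of_forall fun x => sq_nonneg _)]
    refine lintegral_congr fun x => ?_
    rw [show eq' x = ENNReal.ofReal |q x| from congrFun heq_eq x, hpow,
      ← ENNReal.ofReal_pow (abs_nonneg _), sq_abs]
  have hφ_eq : (∫⁻ y, eφ y) = ENNReal.ofReal A := by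
    rw [hA, ofReal_integral_eq_lintegral_ofReal hφa
      (Filter.Eventually.of_forall fun y => abs_nonneg _)]
    exact lintegral_congr fun y => Real.enorm_eq_ofReal_abs _
  -- Step 7 : back to real integrals
  set RHSe : ℝ≥0∞ := ENNReal.ofReal A *
      (2 * ((ENNReal.ofReal Iv) ^ (1/2:ℝ) * (ENNReal.ofReal Iq) ^ (1/2:ℝ))) with hRHSe
  have hbound : (∫⁻ x in B, (‖F x‖₊ : ℝ≥0∞)) ≤ RHSe := by
    rw [hRHSe, ← hφ_eq, ← hVe_eq, ← hQe_eq]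
    exact main_ennreal
  have hRHSe_ne_top : RHSe ≠ ∞ := by
    rw [hRHSe]
    refine ENNReal.mul_ne_top ENNReal.ofReal_ne_top ?_
    refine ENNReal.mul_ne_top (by norm_num) ?_
    exact ENNReal.mul_ne_top
      (ENNReal.rpow_ne_top_of_nonneg (by norm_num) ENNReal.ofReal_ne_top)
      (ENNReal.rpow_ne_top_of_nonneg (by norm_num) ENNReal.ofReal_ne_top)
  have hFreal : (∫ x in B, |F x|) = (∫⁻ x in B, (‖F x‖₊ : ℝ≥0∞)).toReal := by
    rw [integral_eq_lintegral_of_nonneg_ae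
      (Filter.Eventually.of_forall fun x => abs_nonneg _) hFint.1]
    congr 1
    exact lintegral_congr fun x => (Real.enorm_eq_ofReal_abs _).symm
  have hRHSe_toReal : RHSe.toReal = A * (2 * (Real.sqrt Iv * Real.sqrt Iq)) := by
    rw [hRHSe, ENNReal.toReal_mul, ENNReal.toReal_mul, ENNReal.toReal_mul,
      ENNReal.toReal_ofReal hA0, ENNReal.toReal_ofNat,
      ← ENNReal.toReal_rpow, ← ENNReal.toReal_rpow,
      ENNReal.toReal_ofReal hIv0, ENNReal.toReal_ofReal hIq0,
      Real.sqrt_eq_rpow, Real.sqrt_eq_rpow]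
  have hmain_real : (∫ x in B, |F x|) ≤ A * (2 * (Real.sqrt Iv * Real.sqrt Iq)) := by
    rw [hFreal, ← hRHSe_toReal]
    exact ENNReal.toReal_mono hRHSe_ne_top hbound
  -- Step 9 : conclude
  have hgoal_lhs : cellAvg d L
      (fun x => |v x * conv d (⇑φ) q x - conv d (⇑φ) (fun y => v y * q y) x|)
      = (L ^ d)⁻¹ * ∫ x in B, |F x| := rfl
  rw [hgoal_lhs, hrhs]
  have := mul_le_mul_of_nonneg_left hmain_real hc0
  calc (L ^ d)⁻¹ * ∫ x in B, |F x|
      ≤ (L ^ d)⁻¹ * (A * (2 * (Real.sqrt Iv * Real.sqrt Iq))) := this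
    _ = (L ^ d)⁻¹ * (2 * A * Real.sqrt Iv * Real.sqrt Iq) := by ring
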